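/- With the same distribution (x uniform on Z_3^K, (y,z) as in the three-function expansion lemma), for any g : Z_3^L → ℂ with |g| = 1 everywhere: E[g(y)·conj(g(z))] = Σ_{α : |α[i]| ≡ 0 mod 3 for all i ∈ [K]} ĝ(α)·conj(ĝ(−α))·(−1/2)^{#α}, where α[i] denotes the block of α corresponding to π^{-1}(i) and |α[i]| is the sum of its entries mod 3. -/

import Mathlib

open Finset

noncomputable def ω : ℂ := Complex.exp (2 * Real.pi * Complex.I / 3)

/-- Fourier coefficient of `f : Z_3^ι → ℂ` at `α`: `E_x[f(x) · conj(ω^{α·x})]`. -/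
noncomputable def fhat {ι : Type*} [Fintype ι] [DecidableEq ι] (f : (ι → ZMod 3) → ℂ)
    (α : ι → ZMod 3) : ℂ :=
  (∑ x : ι → ZMod 3, f x * (starRingEnd ℂ) (ω ^ (∑ i, α i * x i).val)) /
    (Fintype.card (ι → ZMod 3) : ℂ)

/-- The projection `π₃(α) ∈ Z_3^K`, whose `i`-th coordinate is the sum of block `i` of `α`. -/
def pi3 {K d : ℕ} (α : Fin K × Fin d → ZMod 3) : Fin K → ZMod 3 :=
  fun i => ∑ j, α (i, j)

/-- `#α`: number of nonzero coordinates of `α`. -/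
def nsupp {ι : Type*} [Fintype ι] (α : ι → ZMod 3) : ℕ :=
  (univ.filter (fun i => α i ≠ 0)).card

/-- The test distribution's joint pmf: `x` uniform on `Z_3^K`, and independently per coordinate
`(i,j)`, `(y_{ij}, z_{ij})` uniform over the six pairs with `y_{ij} + z_{ij} ≠ 2·x_i`,
i.e. the pairs `(a,a+1),(a,a+2),(a+1,a),(a+1,a+1),(a+2,a),(a+2,a+2)` for `a = x_i`. -/
noncomputable def wt {K d : ℕ} (x : Fin K → ZMod 3) (y z : Fin K × Fin d → ZMod 3) : ℝ :=
  (1 / 3 ^ K) * ∏ p : Fin K × Fin d, (if y p + z p = 2 * x p.1 then (0 : ℝ) else 1/6)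

lemma hprim : IsPrimitiveRoot ω 3 := by
  have h := Complex.isPrimitiveRoot_exp 3 (by norm_num)
  simpa [ω] using h

lemma hω3 : ω ^ 3 = 1 := hprim.pow_eq_one
lemma hω0 : ω ≠ 0 := Complex.exp_ne_zero _

lemma hgeom : 1 + ω + ω ^ 2 = 0 := by
  have := hprim.geom_sum_eq_zero (by norm_num)
  simpa [Finset.sum_range_succ] using this

noncomputable def χ (a : ZMod 3) : ℂ := ω ^ a.val

lemma ωpow (n : ℕ) : ω ^ n = ω ^ (n % 3) := by
  conv_lhs => rw [← Nat.div_add_mod n 3]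
  rw [pow_add, pow_mul, hω3, one_pow, one_mul]

lemma χ_zero : χ 0 = 1 := by simp [χ]

lemma χ_add (a b : ZMod 3) : χ (a + b) = χ a * χ b := by
  rw [χ, ZMod.val_add, ← ωpow, pow_add]; rfl

lemma hωconj : (starRingEnd ℂ) ω = ω ^ 2 := by
  have h1 : ω * (starRingEnd ℂ) ω = 1 := by
    rw [Complex.mul_conj]
    have : ‖ω‖ = 1 := by
      have : ω = Complex.exp ((2 * Real.pi / 3 : ℝ) * Complex.I) := by
        rw [ω]; push_cast; ring_nf
      rw [this, Complex.norm_exp_ofReal_mul_I]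
    norm_cast
    rw [Complex.normSq_eq_norm_sq, this]; norm_num
  have h2 : ω * ω ^ 2 = 1 := by rw [← pow_succ']; exact hω3
  exact mul_left_cancel₀ hω0 (h1.trans h2.symm)

lemma val0 : (0 : ZMod 3).val = 0 := rfl
lemma val1 : (1 : ZMod 3).val = 1 := rfl
lemma val2 : (2 : ZMod 3).val = 2 := rfl

lemma zmod3_cases (u : ZMod 3) : u = 0 ∨ u = 1 ∨ u = 2 := by
  revert u; decide

lemma χ_conj (a : ZMod 3) : (starRingEnd ℂ) (χ a) = χ (-a) := by
  have h4 : ω ^ 4 = ω := by rw [ωpow 4]; norm_num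
  rcases zmod3_cases a with h | h | h <;> subst h
  · simp [χ]
  · rw [show (-(1:ZMod 3)) = 2 by decide, χ, χ, val1, val2, pow_one, hωconj]
  · rw [show (-(2:ZMod 3)) = 1 by decide, χ, χ, val1, val2, pow_one, map_pow, hωconj,
      ← pow_mul]
    norm_num [h4]

lemma sum_zmod3 (f : ZMod 3 → ℂ) : ∑ b : ZMod 3, f b = f 0 + f 1 + f 2 := by
  have huniv : (univ : Finset (ZMod 3)) = {0, 1, 2} := by decide
  rw [huniv, Finset.sum_insert (by decide), Finset.sum_insert (by decide),
    Finset.sum_singleton]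
  ring

lemma sum_χ (u : ZMod 3) : ∑ b : ZMod 3, χ (b * u) = if u = 0 then 3 else 0 := by
  rw [sum_zmod3]
  rcases zmod3_cases u with h | h | h <;> subst h
  · simp only [mul_zero, χ_zero, if_pos rfl]; norm_num
  · rw [if_neg (by decide), zero_mul, one_mul, show ((2:ZMod 3) * 1) = 2 by decide,
      χ_zero, χ, χ, val1, val2, pow_one]
    linear_combination hgeom
  · rw [if_neg (by decide), zero_mul, show ((1:ZMod 3) * 2) = 2 by decide,
      show ((2:ZMod 3) * 2) = 1 by decide, χ_zero, χ, χ, val1, val2, pow_one]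
    linear_combination hgeom

lemma m_eval (u : ZMod 3) :
    ∑ b : ZMod 3, χ (b * u) * (if b = 0 then 1 else (-(1:ℂ)/2)) =
      if u = 0 then 0 else 3/2 := by
  rw [sum_zmod3]
  rcases zmod3_cases u with h | h | h <;> subst h
  · simp only [mul_zero, χ_zero, if_pos rfl, if_neg (show (1:ZMod 3) ≠ 0 by decide),
      if_neg (show (2:ZMod 3) ≠ 0 by decide), one_mul]
    norm_num
  · simp only [if_pos rfl, if_neg (show (1:ZMod 3) ≠ 0 by decide),
      if_neg (show (2:ZMod 3) ≠ 0 by decide), zero_mul, one_mul,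
      show ((2:ZMod 3) * 1) = 2 by decide, χ_zero, χ, val0, val1, val2, pow_one, pow_zero, if_true]
    linear_combination (-(1:ℂ)/2) * hgeom
  · simp only [if_pos rfl, if_neg (show (1:ZMod 3) ≠ 0 by decide),
      if_neg (show (2:ZMod 3) ≠ 0 by decide), zero_mul,
      show ((1:ZMod 3) * 2) = 2 by decide,
      show ((2:ZMod 3) * 2) = 1 by decide, χ_zero, χ, val0, val1, val2, pow_one, pow_zero, if_true]
    linear_combination (-(1:ℂ)/2) * hgeom

lemma χ_def (v : ZMod 3) : ω ^ v.val = χ v := rfl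

lemma χ_sum {β : Type*} (t : Finset β) (f : β → ZMod 3) :
    χ (∑ p ∈ t, f p) = ∏ p ∈ t, χ (f p) := by
  induction t using Finset.cons_induction with
  | empty => simp [χ_zero]
  | cons a t ha ih => rw [Finset.sum_cons, Finset.prod_cons, χ_add, ih]

lemma nsupp_prod {ι : Type*} [Fintype ι] (α : ι → ZMod 3) :
    (-(1:ℂ)/2) ^ nsupp α = ∏ p, (if α p = 0 then 1 else -(1:ℂ)/2) := by
  rw [nsupp, ← Finset.prod_const, Finset.prod_filter]
  simp only [ite_not]

lemma prod_ind {K : ℕ} (Q : Fin K → Prop) [DecidablePred Q] :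
    (∏ i, if Q i then (1:ℂ) else 0) = if (∀ i, Q i) then 1 else 0 := by
  by_cases h : ∀ i, Q i
  · rw [if_pos h]; exact Finset.prod_eq_one fun i _ => if_pos (h i)
  · rw [if_neg h]; push_neg at h; obtain ⟨i, hi⟩ := h
    exact Finset.prod_eq_zero (mem_univ i) (if_neg hi)

lemma lhs_eval (K d : ℕ) (y z : Fin K × Fin d → ZMod 3) :
    ∑ x : Fin K → ZMod 3,
        (((1 / 3 ^ K) * ∏ p : Fin K × Fin d,
          (if y p + z p = 2 * x p.1 then (0 : ℝ) else 1/6) : ℝ) : ℂ)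
      = (1/3:ℂ)^K * (1/6:ℂ)^(K*d) *
          ∑ τ : Fin K → ZMod 3, ∏ p : Fin K × Fin d,
            (if y p + z p = τ p.1 then (0:ℂ) else 1) := by
  have hcast : ∀ x : Fin K → ZMod 3,
      (((1 / 3 ^ K) * ∏ p : Fin K × Fin d,
          (if y p + z p = 2 * x p.1 then (0 : ℝ) else 1/6) : ℝ) : ℂ)
        = (1/3:ℂ)^K * (1/6:ℂ)^(K*d) *
            ∏ p : Fin K × Fin d, (if y p + z p = 2 * x p.1 then (0:ℂ) else 1) := by
    intro x
    push_cast [apply_ite (fun r : ℝ => (r : ℂ))]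
    rw [show ∀ q : Fin K × Fin d → Prop, ∀ _ : DecidablePred q,
        (∏ p, if q p then (0:ℂ) else 1/6) = ∏ p, ((1/6) * if q p then (0:ℂ) else 1) from
      fun q _ => Finset.prod_congr rfl fun p _ => by split_ifs <;> norm_num]
    rw [Finset.prod_mul_distrib, Finset.prod_const]
    simp [Fintype.card_prod, one_div, mul_comm, mul_assoc, mul_left_comm, inv_pow]
  rw [Finset.sum_congr rfl fun x _ => hcast x, ← Finset.mul_sum]
  congr 1
  have hinv : Function.Involutive (fun x : Fin K → ZMod 3 => fun i => 2 * x i) :=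
    fun x => funext fun i =>
      show (2:ZMod 3) * (2 * x i) = x i by
        rw [← mul_assoc, show (2:ZMod 3)*2 = 1 by decide, one_mul]
  exact Fintype.sum_bijective _ hinv.bijective _ _ (fun x => rfl)

lemma hive (v : ZMod 3) : (if v = 0 then (1:ℂ) else 0) = (1/3) * ∑ b, χ (b * v) := by
  rw [sum_χ]; split_ifs <;> norm_num

lemma rhs_eval (K d : ℕ) (y z : Fin K × Fin d → ZMod 3) :
    (1 / ((Fintype.card (Fin K × Fin d → ZMod 3) : ℂ))^2) *
      ∑ α ∈ univ.filter (fun α : Fin K × Fin d → ZMod 3 => ∀ i, (∑ j, α (i, j)) = 0),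
        χ (-(∑ p, α p * (y p + z p))) * (-(1:ℂ)/2) ^ nsupp α
    = (1/3:ℂ)^K * (1/6:ℂ)^(K*d) *
        ∑ τ : Fin K → ZMod 3, ∏ p : Fin K × Fin d, (if y p + z p = τ p.1 then (0:ℂ) else 1) := by
  have hW : ∀ α : Fin K × Fin d → ZMod 3, ∀ τ : Fin K → ZMod 3,
      (∏ i, χ (τ i * ∑ j, α (i, j))) *
        (χ (-(∑ p, α p * (y p + z p))) * (-(1:ℂ)/2) ^ nsupp α)
      = ∏ p : Fin K × Fin d,
          (χ (α p * (τ p.1 - (y p + z p))) * (if α p = 0 then 1 else -(1:ℂ)/2)) := by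
    intro α τ
    have h1 : (∏ i, χ (τ i * ∑ j, α (i, j)))
        = ∏ p : Fin K × Fin d, χ (τ p.1 * α p) := by
      rw [Fintype.prod_prod_type (f := fun p : Fin K × Fin d => χ (τ p.1 * α p))]
      exact Finset.prod_congr rfl fun i _ => by rw [Finset.mul_sum, χ_sum]
    have h2 : χ (-(∑ p : Fin K × Fin d, α p * (y p + z p)))
        = ∏ p : Fin K × Fin d, χ (-(α p * (y p + z p))) := by
      rw [← Finset.sum_neg_distrib, χ_sum]
    rw [h1, h2, nsupp_prod, ← Finset.prod_mul_distrib, ← Finset.prod_mul_distrib]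
    refine Finset.prod_congr rfl fun p _ => ?_
    rw [← mul_assoc, ← χ_add,
      show τ p.1 * α p + -(α p * (y p + z p)) = α p * (τ p.1 - (y p + z p)) by ring]
  have hBlock : ∀ α : Fin K × Fin d → ZMod 3,
      (if ∀ i, (∑ j, α (i, j)) = 0 then (1:ℂ) else 0)
      = (1/3:ℂ)^K * ∑ τ : Fin K → ZMod 3, ∏ i, χ (τ i * ∑ j, α (i, j)) := by
    intro α
    rw [← prod_ind (fun i => (∑ j, α (i, j)) = 0),
      Finset.prod_congr rfl fun i _ => hive (∑ j, α (i, j)),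
      Finset.prod_mul_distrib, Finset.prod_const, Finset.card_univ, Fintype.card_fin,
      Fintype.prod_sum (f := fun (i : Fin K) (b : ZMod 3) => χ (b * ∑ j, α (i, j)))]
  have hsum : ∀ τ : Fin K → ZMod 3,
      (∑ α : Fin K × Fin d → ZMod 3, ∏ p : Fin K × Fin d,
        (χ (α p * (τ p.1 - (y p + z p))) * (if α p = 0 then 1 else -(1:ℂ)/2)))
      = ∏ p : Fin K × Fin d, (if τ p.1 - (y p + z p) = 0 then (0:ℂ) else 3/2) := by
    intro τ
    rw [← Fintype.prod_sum (f := fun (p : Fin K × Fin d) (b : ZMod 3) =>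
      χ (b * (τ p.1 - (y p + z p))) * (if b = 0 then 1 else -(1:ℂ)/2))]
    exact Finset.prod_congr rfl fun p _ => m_eval _
  have hprod32 : ∀ τ : Fin K → ZMod 3,
      (∏ p : Fin K × Fin d, (if τ p.1 - (y p + z p) = 0 then (0:ℂ) else 3/2))
      = (3/2:ℂ)^(K*d) * ∏ p : Fin K × Fin d, (if y p + z p = τ p.1 then (0:ℂ) else 1) := by
    intro τ
    rw [Finset.prod_congr rfl (fun p (_ : p ∈ univ) => show
        (if τ p.1 - (y p + z p) = 0 then (0:ℂ) else 3/2)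
          = (3/2:ℂ) * (if y p + z p = τ p.1 then (0:ℂ) else 1) from by
      by_cases h : y p + z p = τ p.1
      · rw [if_pos h, mul_zero, if_pos (by rw [h, sub_self])]
      · rw [if_neg h, mul_one, if_neg (fun h' => h (sub_eq_zero.mp h').symm)]),
      Finset.prod_mul_distrib, Finset.prod_const, Finset.card_univ, Fintype.card_prod,
      Fintype.card_fin, Fintype.card_fin]
  have hcard : ((Fintype.card (Fin K × Fin d → ZMod 3) : ℕ) : ℂ) = 3 ^ (K * d) := by
    rw [Fintype.card_fun]
    simp
  calc (1 / ((Fintype.card (Fin K × Fin d → ZMod 3) : ℂ))^2) *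
      ∑ α ∈ univ.filter (fun α : Fin K × Fin d → ZMod 3 => ∀ i, (∑ j, α (i, j)) = 0),
        χ (-(∑ p, α p * (y p + z p))) * (-(1:ℂ)/2) ^ nsupp α
      = (1 / ((Fintype.card (Fin K × Fin d → ZMod 3) : ℂ))^2) *
          ∑ α : Fin K × Fin d → ZMod 3,
            (if ∀ i, (∑ j, α (i, j)) = 0 then (1:ℂ) else 0) *
              (χ (-(∑ p, α p * (y p + z p))) * (-(1:ℂ)/2) ^ nsupp α) := by
        rw [Finset.sum_filter]
        congr 1
        exact Finset.sum_congr rfl fun α _ => by split_ifs <;> simp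
    _ = (1 / ((Fintype.card (Fin K × Fin d → ZMod 3) : ℂ))^2) *
          ∑ α : Fin K × Fin d → ZMod 3, (1/3:ℂ)^K *
            ∑ τ : Fin K → ZMod 3, (∏ i, χ (τ i * ∑ j, α (i, j))) *
              (χ (-(∑ p, α p * (y p + z p))) * (-(1:ℂ)/2) ^ nsupp α) := by
        congr 1
        refine Finset.sum_congr rfl fun α _ => ?_
        rw [hBlock α, mul_assoc, Finset.sum_mul]
    _ = (1 / ((Fintype.card (Fin K × Fin d → ZMod 3) : ℂ))^2) * ((1/3:ℂ)^K *
          ∑ τ : Fin K → ZMod 3, ∑ α : Fin K × Fin d → ZMod 3,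
            (∏ i, χ (τ i * ∑ j, α (i, j))) *
              (χ (-(∑ p, α p * (y p + z p))) * (-(1:ℂ)/2) ^ nsupp α)) := by
        rw [← Finset.mul_sum, Finset.sum_comm]
    _ = (1 / ((Fintype.card (Fin K × Fin d → ZMod 3) : ℂ))^2) * ((1/3:ℂ)^K *
          ∑ τ : Fin K → ZMod 3, (3/2:ℂ)^(K*d) *
            ∏ p : Fin K × Fin d, (if y p + z p = τ p.1 then (0:ℂ) else 1)) := by
        congr 2
        refine Finset.sum_congr rfl fun τ _ => ?_
        rw [Finset.sum_congr rfl fun α _ => hW α τ, hsum τ, hprod32 τ]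
    _ = (1/3:ℂ)^K * (1/6:ℂ)^(K*d) *
          ∑ τ : Fin K → ZMod 3, ∏ p : Fin K × Fin d,
            (if y p + z p = τ p.1 then (0:ℂ) else 1) := by
        rw [← Finset.mul_sum, hcard]
        have h3 : ((3:ℂ)^(K*d)) ≠ 0 := pow_ne_zero _ (by norm_num)
        have h2 : ((2:ℂ)^(K*d)) ≠ 0 := pow_ne_zero _ (by norm_num)
        have h3K : ((3:ℂ)^K) ≠ 0 := pow_ne_zero _ (by norm_num)
        have h6 : ((6:ℂ))^(K*d) = 2^(K*d) * 3^(K*d) := by rw [← mul_pow]; norm_num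
        simp only [div_pow, one_pow]
        rw [h6]
        field_simp

lemma fhat_mul {ι : Type*} [Fintype ι] [DecidableEq ι] (g : (ι → ZMod 3) → ℂ)
    (α : ι → ZMod 3) :
    fhat g α * (starRingEnd ℂ) (fhat g (-α)) =
      (1 / ((Fintype.card (ι → ZMod 3) : ℂ))^2) *
        ∑ y : ι → ZMod 3, ∑ z : ι → ZMod 3,
          g y * (starRingEnd ℂ) (g z) * χ (-(∑ p, α p * (y p + z p))) := by
  rw [fhat, fhat]
  simp only [χ_def]
  have hnum : (∑ y : ι → ZMod 3, g y * (starRingEnd ℂ) (χ (∑ i, α i * y i))) *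
      (starRingEnd ℂ) (∑ z : ι → ZMod 3, g z * (starRingEnd ℂ) (χ (∑ i, (-α) i * z i)))
      = ∑ y : ι → ZMod 3, ∑ z : ι → ZMod 3,
          g y * (starRingEnd ℂ) (g z) * χ (-(∑ p, α p * (y p + z p))) := by
    rw [map_sum, Finset.sum_mul_sum]
    refine Finset.sum_congr rfl fun y _ => Finset.sum_congr rfl fun z _ => ?_
    rw [map_mul, Complex.conj_conj, χ_conj]
    have harg : -(∑ i, α i * y i) + (∑ i, (-α) i * z i)
        = -(∑ p, α p * (y p + z p)) := by
      rw [← Finset.sum_neg_distrib, ← Finset.sum_neg_distrib, ← Finset.sum_add_distrib]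
      refine Finset.sum_congr rfl fun i _ => ?_
      simp only [Pi.neg_apply]
      ring
    rw [← harg, χ_add]
    ring
  rw [map_div₀, map_natCast, div_mul_div_comm, hnum, sq]
  ring


/-- For unimodular `g`, `E[g(y)·conj(g(z))]` equals the sum over `α` with all block sums `≡ 0`
of `ĝ(α)·conj(ĝ(−α))·(−1/2)^{#α}`. -/
theorem stmt9 (K d : ℕ) (hK : 0 < K) (hd : 1 ≤ d)
    (g : (Fin K × Fin d → ZMod 3) → ℂ) (hg : ∀ y, ‖g y‖ = 1) :
    ∑ x : Fin K → ZMod 3, ∑ y : Fin K × Fin d → ZMod 3, ∑ z : Fin K × Fin d → ZMod 3,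
        (wt x y z : ℂ) * g y * (starRingEnd ℂ) (g z)
      = ∑ α ∈ univ.filter (fun α : Fin K × Fin d → ZMod 3 => ∀ i, (∑ j, α (i, j)) = 0),
          fhat g α * (starRingEnd ℂ) (fhat g (-α)) * (-(1 : ℂ)/2) ^ nsupp α := by
  have hL : (∑ x : Fin K → ZMod 3, ∑ y : Fin K × Fin d → ZMod 3,
        ∑ z : Fin K × Fin d → ZMod 3, (wt x y z : ℂ) * g y * (starRingEnd ℂ) (g z))
      = ∑ y : Fin K × Fin d → ZMod 3, ∑ z : Fin K × Fin d → ZMod 3,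
          g y * (starRingEnd ℂ) (g z) *
            ((1 / ((Fintype.card (Fin K × Fin d → ZMod 3) : ℂ))^2) *
              ∑ α ∈ univ.filter
                  (fun α : Fin K × Fin d → ZMod 3 => ∀ i, (∑ j, α (i, j)) = 0),
                χ (-(∑ p, α p * (y p + z p))) * (-(1:ℂ)/2) ^ nsupp α) := by
    rw [Finset.sum_comm]
    refine Finset.sum_congr rfl fun y _ => ?_
    rw [Finset.sum_comm]
    refine Finset.sum_congr rfl fun z _ => ?_
    rw [rhs_eval K d y z, ← lhs_eval K d y z]
    simp only [wt]
    rw [Finset.mul_sum]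
    exact Finset.sum_congr rfl fun x _ => by ring
  have hR : (∑ α ∈ univ.filter
        (fun α : Fin K × Fin d → ZMod 3 => ∀ i, (∑ j, α (i, j)) = 0),
        fhat g α * (starRingEnd ℂ) (fhat g (-α)) * (-(1 : ℂ)/2) ^ nsupp α)
      = ∑ y : Fin K × Fin d → ZMod 3, ∑ z : Fin K × Fin d → ZMod 3,
          g y * (starRingEnd ℂ) (g z) *
            ((1 / ((Fintype.card (Fin K × Fin d → ZMod 3) : ℂ))^2) *
              ∑ α ∈ univ.filter
                  (fun α : Fin K × Fin d → ZMod 3 => ∀ i, (∑ j, α (i, j)) = 0),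
                χ (-(∑ p, α p * (y p + z p))) * (-(1:ℂ)/2) ^ nsupp α) := by
    calc (∑ α ∈ univ.filter
          (fun α : Fin K × Fin d → ZMod 3 => ∀ i, (∑ j, α (i, j)) = 0),
          fhat g α * (starRingEnd ℂ) (fhat g (-α)) * (-(1 : ℂ)/2) ^ nsupp α)
        = ∑ α ∈ univ.filter
            (fun α : Fin K × Fin d → ZMod 3 => ∀ i, (∑ j, α (i, j)) = 0),
            ∑ y : Fin K × Fin d → ZMod 3, ∑ z : Fin K × Fin d → ZMod 3,
              g y * (starRingEnd ℂ) (g z) *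
                ((1 / ((Fintype.card (Fin K × Fin d → ZMod 3) : ℂ))^2) *
                  (χ (-(∑ p, α p * (y p + z p))) * (-(1:ℂ)/2) ^ nsupp α)) := by
          refine Finset.sum_congr rfl fun α _ => ?_
          rw [fhat_mul g α]
          simp only [Finset.mul_sum, Finset.sum_mul]
          exact Finset.sum_congr rfl fun y _ =>
            Finset.sum_congr rfl fun z _ => by ring
      _ = ∑ y : Fin K × Fin d → ZMod 3, ∑ z : Fin K × Fin d → ZMod 3,
            ∑ α ∈ univ.filter
              (fun α : Fin K × Fin d → ZMod 3 => ∀ i, (∑ j, α (i, j)) = 0),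
              g y * (starRingEnd ℂ) (g z) *
                ((1 / ((Fintype.card (Fin K × Fin d → ZMod 3) : ℂ))^2) *
                  (χ (-(∑ p, α p * (y p + z p))) * (-(1:ℂ)/2) ^ nsupp α)) := by
          rw [Finset.sum_comm]
          exact Finset.sum_congr rfl fun y _ => Finset.sum_comm
      _ = ∑ y : Fin K × Fin d → ZMod 3, ∑ z : Fin K × Fin d → ZMod 3,
            g y * (starRingEnd ℂ) (g z) *
              ((1 / ((Fintype.card (Fin K × Fin d → ZMod 3) : ℂ))^2) *
                ∑ α ∈ univ.filter
                    (fun α : Fin K × Fin d → ZMod 3 => ∀ i, (∑ j, α (i, j)) = 0),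
                  χ (-(∑ p, α p * (y p + z p))) * (-(1:ℂ)/2) ^ nsupp α) := by
          refine Finset.sum_congr rfl fun y _ => Finset.sum_congr rfl fun z _ => ?_
          rw [Finset.mul_sum, Finset.mul_sum]
  rw [hL, hR]
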